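/- For the soft second-price payment rule p_i(b_i,b_{-i}) = b_i - (Σ_j e^{m b_j})/(m e^{m b_i}) · ln( (Σ_j e^{m b_j}) / (1 + Σ_{j≠i} e^{m b_j}) ) with distinct bids satisfying b_i = max_j b_j > b_{(2)} (the second largest bid), the limit as m → ∞ of p_i(b_i, b_{-i}) equals b_{(2)}. -/

import Mathlib

open Finset Filter

/-- Soft second-price payment rule with parameter `m`. -/
noncomputable def softPay (n : ℕ) (m : ℝ) (b : Fin n → ℝ) (i : Fin n) : ℝ :=
  b i - (∑ j, Real.exp (m * b j)) / (m * Real.exp (m * b i)) *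
    Real.log ((∑ j, Real.exp (m * b j)) /
      (1 + ∑ j ∈ Finset.univ.erase i, Real.exp (m * b j)))

theorem stmt2 (n : ℕ) (hn : 2 ≤ n) (b : Fin n → ℝ)
    (hdist : Function.Injective b) (hb : ∀ j, b j ∈ Set.Ioo (0:ℝ) 1)
    (i : Fin n) (hmax : ∀ j, j ≠ i → b j < b i)
    (b2 : ℝ) (hb2 : ∃ j₀, j₀ ≠ i ∧ b j₀ = b2) (hb2max : ∀ j, j ≠ i → b j ≤ b2) :
    Tendsto (fun m : ℝ => softPay n m b i) atTop (nhds b2) := by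
  obtain ⟨j₀, hj₀i, hj₀b⟩ := hb2
  have hb2pos : 0 < b2 := hj₀b ▸ (hb j₀).1
  set ε : ℝ → ℝ := fun m => ∑ j ∈ Finset.univ.erase i, Real.exp (m * (b j - b i)) with hεdef
  have hεnonneg : ∀ m, 0 ≤ ε m := fun m => Finset.sum_nonneg fun j _ => (Real.exp_pos _).le
  have hε0 : Tendsto ε atTop (nhds 0) := by
    have h : Tendsto ε atTop (nhds (∑ j ∈ Finset.univ.erase i, (0:ℝ))) := by
      apply tendsto_finset_sum
      intro j hj
      have hlt : b j - b i < 0 := sub_neg.mpr (hmax j (Finset.ne_of_mem_erase hj))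
      have hm : Tendsto (fun m : ℝ => m * (b j - b i)) atTop atBot :=
        Tendsto.atTop_mul_const_of_neg hlt tendsto_id
      exact Real.tendsto_exp_atBot.comp hm
    simpa using h
  set A : ℝ → ℝ := fun m => 1 + ε m with hAdef
  have hApos : ∀ m, 0 < A m := fun m => by have := hεnonneg m; simp only [hAdef]; linarith
  have hA1 : Tendsto A atTop (nhds 1) := by
    have h := hε0.const_add (1 : ℝ)
    rw [add_zero] at h
    exact h
  have hlogA : Tendsto (fun m => Real.log (A m)) atTop (nhds 0) := by
    have := (Real.continuousAt_log (by norm_num : (1:ℝ) ≠ 0)).tendsto.comp hA1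
    simpa [Function.comp_def] using this
  set S' : ℝ → ℝ := fun m => ∑ j ∈ Finset.univ.erase i, Real.exp (m * b j) with hS'def
  have hS'nonneg : ∀ m, 0 ≤ S' m := fun m => Finset.sum_nonneg fun j _ => (Real.exp_pos _).le
  have hS'pos : ∀ m, (0:ℝ) < 1 + S' m := fun m => by have := hS'nonneg m; linarith
  set L : ℝ → ℝ := fun m => Real.log (1 + S' m) with hLdef
  have hnpos : (0:ℝ) < n := by positivity
  -- squeeze for L m / m
  have hLlow : ∀ᶠ m : ℝ in atTop, b2 ≤ L m / m := by
    filter_upwards [eventually_gt_atTop (0:ℝ)] with m hm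
    have hle : Real.exp (m * b2) ≤ 1 + S' m := by
      have h1 : Real.exp (m * b j₀) ≤ S' m := Finset.single_le_sum
          (fun j _ => (Real.exp_pos (m * b j)).le)
          (Finset.mem_erase.mpr ⟨hj₀i, Finset.mem_univ j₀⟩)
      rw [hj₀b] at h1
      linarith
    have : m * b2 ≤ L m := by
      rw [hLdef]
      exact (Real.le_log_iff_exp_le (hS'pos m)).mpr hle
    rw [le_div_iff₀ hm]
    linarith [this]
  have hLhigh : ∀ᶠ m : ℝ in atTop, L m / m ≤ Real.log n / m + b2 := by
    filter_upwards [eventually_gt_atTop (0:ℝ)] with m hm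
    have hub : 1 + S' m ≤ n * Real.exp (m * b2) := by
      have h1 : S' m ≤ (n - 1 : ℝ) * Real.exp (m * b2) := by
        have := Finset.sum_le_card_nsmul (Finset.univ.erase i)
          (fun j => Real.exp (m * b j)) (Real.exp (m * b2))
          (fun j hj => Real.exp_le_exp.mpr
            (mul_le_mul_of_nonneg_left (hb2max j (Finset.ne_of_mem_erase hj)) hm.le))
        have hcard : ((Finset.univ.erase i).card : ℝ) = (n : ℝ) - 1 := by
          rw [Finset.card_erase_of_mem (Finset.mem_univ i)]
          simp
          have : 1 ≤ n := by omega
          push_cast [Nat.cast_sub this]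
          ring
        rw [nsmul_eq_mul] at this
        calc S' m ≤ ((Finset.univ.erase i).card : ℝ) * Real.exp (m * b2) := this
          _ = (n - 1 : ℝ) * Real.exp (m * b2) := by rw [hcard]
      have h2 : (1:ℝ) ≤ Real.exp (m * b2) := by
        rw [Real.one_le_exp_iff]
        positivity
      nlinarith [Real.exp_pos (m * b2)]
    have hL2 : L m ≤ Real.log n + m * b2 := by
      rw [hLdef]
      calc Real.log (1 + S' m) ≤ Real.log (n * Real.exp (m * b2)) :=
            Real.log_le_log (hS'pos m) hub
        _ = Real.log n + m * b2 := by
            rw [Real.log_mul (by positivity) (Real.exp_ne_zero _), Real.log_exp]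
    rw [div_le_iff₀ hm]
    calc L m ≤ Real.log n + m * b2 := hL2
      _ = (Real.log n / m + b2) * m := by field_simp
  have hLtend : Tendsto (fun m => L m / m) atTop (nhds b2) := by
    have hup : Tendsto (fun m : ℝ => Real.log n / m + b2) atTop (nhds b2) := by
      have := (tendsto_const_nhds (x := Real.log n)).div_atTop tendsto_id
      have := this.add_const b2
      simpa using this
    exact tendsto_of_tendsto_of_tendsto_of_le_of_le' tendsto_const_nhds hup hLlow hLhigh
  -- the limit of the algebraic form
  have hg : Tendsto (fun m => b i - A m * b i - A m * Real.log (A m) / m + A m * (L m / m))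
      atTop (nhds b2) := by
    have h1 : Tendsto (fun m => A m * b i) atTop (nhds (b i)) := by
      have := hA1.mul_const (b i); simpa using this
    have h2 : Tendsto (fun m => A m * Real.log (A m) / m) atTop (nhds 0) :=
      (hA1.mul hlogA).div_atTop tendsto_id
    have h3 : Tendsto (fun m => A m * (L m / m)) atTop (nhds b2) := by
      have := hA1.mul hLtend; simpa using this
    have := ((tendsto_const_nhds (x := b i)).sub h1).sub h2 |>.add h3
    simpa using this
  refine Tendsto.congr' ?_ hg
  filter_upwards [eventually_gt_atTop (0:ℝ)] with m hm
  have hmne : m ≠ 0 := hm.ne'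
  have hS : ∑ j, Real.exp (m * b j) = Real.exp (m * b i) * A m := by
    rw [← Finset.add_sum_erase _ _ (Finset.mem_univ i)]
    simp only [hAdef, hεdef, mul_add, mul_one, Finset.mul_sum]
    congr 1
    apply Finset.sum_congr rfl
    intro j _
    rw [← Real.exp_add]
    ring_nf
  have hSpos : (0:ℝ) < ∑ j, Real.exp (m * b j) :=
    Finset.sum_pos (fun j _ => Real.exp_pos _) ⟨i, Finset.mem_univ i⟩
  have hlog : Real.log ((∑ j, Real.exp (m * b j)) /
      (1 + ∑ j ∈ Finset.univ.erase i, Real.exp (m * b j)))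
      = m * b i + Real.log (A m) - L m := by
    rw [Real.log_div hSpos.ne' (hS'pos m).ne', hS,
      Real.log_mul (Real.exp_ne_zero _) (hApos m).ne', Real.log_exp, hLdef]
  symm
  simp only [softPay]
  rw [hlog, hS]
  have hexp := Real.exp_ne_zero (m * b i)
  field_simp
  ring
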